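/- Let d, s, r ≥ 1 and let E be a channel on M_s with Kraus operators E_1, …, E_r (so E(X) = Σ_{i=1}^r E_i X E_i* for all X and Σ_{i=1}^r E_i* E_i = I_s). Then the following are equivalent: (A) there exist a subchannel S from M_d to M_s, a subchannel R from M_s to M_d, and a real p > 0 such that R(E(S(X))) = p·X for all X ∈ M_d; (D) there exist an s×d complex matrix S_*, a d×s complex matrix R_*, and complex scalars c_1, …, c_r such that R_* E_i S_* = c_i·I_d for every i = 1, …, r and c_{i₀} ≠ 0 for some i₀. -/

import Mathlib

open Matrix Kronecker BigOperators
open scoped ComplexOrder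

noncomputable section

/-- `Mat n` is the space of `n × n` complex matrices. -/
abbrev Mat (n : ℕ) := Matrix (Fin n) (Fin n) ℂ

/-- A subchannel from `M_n` to `M_m`: a map of Kraus form whose Kraus operators satisfy
`∑ Kᴴ K ≤ 1` in the Loewner order. -/
def IsSubchannel {n m : Type} [Fintype n] [DecidableEq n] [Fintype m]
    (Φ : Matrix n n ℂ → Matrix m m ℂ) : Prop :=
  ∃ (k : ℕ) (K : Fin k → Matrix m n ℂ),
    (∀ X, Φ X = ∑ i, K i * X * (K i)ᴴ) ∧ (1 - ∑ i, (K i)ᴴ * K i).PosSemidef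

/-- A channel from `M_n` to `M_m`: a map of Kraus form with `∑ Kᴴ K = 1`. -/
def IsChannel {n m : Type} [Fintype n] [DecidableEq n] [Fintype m]
    (Φ : Matrix n n ℂ → Matrix m m ℂ) : Prop :=
  ∃ (k : ℕ) (K : Fin k → Matrix m n ℂ),
    (∀ X, Φ X = ∑ i, K i * X * (K i)ᴴ) ∧ (∑ i, (K i)ᴴ * K i) = 1

/-- `E` is probabilistically correctable for `ℂ^d`. -/
def ProbCorrectable (d : ℕ) {s : ℕ} (E : Mat s → Mat s) : Prop :=
  ∃ (S : Mat d → Mat s) (R : Mat s → Mat d) (p : ℝ),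
    IsSubchannel S ∧ IsSubchannel R ∧ 0 < p ∧ ∀ X, R (E (S X)) = (p : ℂ) • X

/-- `E` is perfectly correctable for `ℂ^d`. -/
def PerfCorrectable (d : ℕ) {s : ℕ} (E : Mat s → Mat s) : Prop :=
  ∃ (S : Mat d → Mat s) (R : Mat s → Mat d),
    IsSubchannel S ∧ IsSubchannel R ∧ ∀ X, R (E (S X)) = X

/-- The Choi matrix of a map on `M_s`. -/
def choi {s : ℕ} (Φ : Mat s → Mat s) : Matrix (Fin s × Fin s) (Fin s × Fin s) ℂ :=
  ∑ i : Fin s, ∑ j : Fin s, (Φ (single i j 1)) ⊗ₖ (single i j 1)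

/-- `rP d s`: the largest `r` such that every channel on `M_s` with Choi rank at most `r`
is probabilistically correctable for `ℂ^d`. -/
def rP (d s : ℕ) : ℕ :=
  sSup {r : ℕ | ∀ E : Mat s → Mat s, IsChannel E → (choi E).rank ≤ r → ProbCorrectable d E}

/-- `rP1 d s`: the largest `r` such that every channel on `M_s` with Choi rank at most `r`
is perfectly correctable for `ℂ^d`. -/
def rP1 (d s : ℕ) : ℕ :=
  sSup {r : ℕ | ∀ E : Mat s → Mat s, IsChannel E → (choi E).rank ≤ r → PerfCorrectable d E}

lemma exists_scale {m n : ℕ} (A : Matrix (Fin m) (Fin n) ℂ) :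
    ∃ t : ℝ, 0 < t ∧ (1 - (((t : ℂ)^2)) • (Aᴴ * A)).PosSemidef := by
  set T : ℝ := ∑ i, ∑ j, Complex.normSq (A i j) with hTdef
  have hT : 0 ≤ T := Finset.sum_nonneg fun i _ => Finset.sum_nonneg fun j _ =>
    Complex.normSq_nonneg _
  set t : ℝ := (Real.sqrt (T + 1))⁻¹ with htdef
  have htpos : (0:ℝ) < t := by positivity
  refine ⟨t, htpos, ?_⟩
  have ht2 : t^2 = (T + 1)⁻¹ := by
    rw [htdef, inv_pow, Real.sq_sqrt (by linarith)]
  rw [posSemidef_iff_dotProduct_mulVec]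
  constructor
  · unfold Matrix.IsHermitian
    rw [conjTranspose_sub, conjTranspose_smul, conjTranspose_one,
      conjTranspose_mul, conjTranspose_conjTranspose]
    congr 1
    simp
  · intro x
    have key : ∀ y : Fin n → ℂ, ∑ i, Complex.normSq ((A *ᵥ y) i) ≤ T * ∑ j, Complex.normSq (y j) := by
      intro y
      have h1 : ∀ i, Complex.normSq ((A *ᵥ y) i) ≤ (∑ j, Complex.normSq (A i j)) * ∑ j, Complex.normSq (y j) := by
        intro i
        have : ‖(A *ᵥ y) i‖ ≤ ∑ j, ‖A i j‖ * ‖y j‖ := by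
          rw [Matrix.mulVec, dotProduct]
          exact (norm_sum_le _ _).trans (by simp)
        calc Complex.normSq ((A *ᵥ y) i) = ‖(A *ᵥ y) i‖^2 := by
              exact (Complex.sq_norm _).symm
          _ ≤ (∑ j, ‖A i j‖ * ‖y j‖)^2 := by
              apply pow_le_pow_left₀ (norm_nonneg _) this
          _ ≤ (∑ j, ‖A i j‖^2) * ∑ j, ‖y j‖^2 :=
              Finset.sum_mul_sq_le_sq_mul_sq _ _ _
          _ = (∑ j, Complex.normSq (A i j)) * ∑ j, Complex.normSq (y j) := by
              simp [Complex.sq_norm]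
      calc ∑ i, Complex.normSq ((A *ᵥ y) i)
          ≤ ∑ i, (∑ j, Complex.normSq (A i j)) * ∑ j, Complex.normSq (y j) :=
            Finset.sum_le_sum fun i _ => h1 i
        _ = T * ∑ j, Complex.normSq (y j) := by rw [hTdef, Finset.sum_mul]
    have expand : (1 - ((t:ℂ)^2) • (Aᴴ*A)) *ᵥ x = x - ((t:ℂ)^2) • ((Aᴴ*A) *ᵥ x) := by
      rw [sub_mulVec, one_mulVec, smul_mulVec]
    rw [expand, dotProduct_sub, dotProduct_smul]
    have h3 : ∀ (k:ℕ) (y : Fin k → ℂ), star y ⬝ᵥ y = ((∑ j, Complex.normSq (y j) : ℝ) : ℂ) := by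
      intro k y
      push_cast
      simp [dotProduct, Complex.normSq_eq_conj_mul_self]
    have h2 : star x ⬝ᵥ ((Aᴴ*A) *ᵥ x) = ((∑ i, Complex.normSq ((A *ᵥ x) i) : ℝ) : ℂ) := by
      rw [← mulVec_mulVec, dotProduct_mulVec, vecMul_conjTranspose, star_star, h3]
    rw [h2, h3]
    set S1 : ℝ := ∑ j, Complex.normSq (x j)
    set S2 : ℝ := ∑ i, Complex.normSq ((A *ᵥ x) i)
    have hS1 : 0 ≤ S1 := Finset.sum_nonneg fun j _ => Complex.normSq_nonneg _
    have hS2 : 0 ≤ S2 := Finset.sum_nonneg fun j _ => Complex.normSq_nonneg _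
    have hb : t^2 * S2 ≤ S1 := by
      rw [ht2]
      have h4 : S2 ≤ T * S1 := key x
      have h5 : (T+1)⁻¹ * S2 ≤ (T+1)⁻¹ * (T * S1) :=
        mul_le_mul_of_nonneg_left h4 (by positivity)
      have h6 : (T+1)⁻¹ * (T * S1) ≤ S1 := by
        rw [← mul_assoc]
        have : (T+1)⁻¹ * T ≤ 1 := by
          rw [inv_mul_le_iff₀ (by linarith)]; linarith
        nlinarith
      linarith
    have : (t:ℂ)^2 • ((S2:ℝ):ℂ) = (((t^2 * S2 : ℝ)):ℂ) := by
      rw [smul_eq_mul]; push_cast; ring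
    rw [this, ← Complex.ofReal_sub]
    rw [Complex.zero_le_real]
    linarith

lemma sum_mul_conj_eq_zero {ι : Type} [Fintype ι] (z : ι → ℂ)
    (h : ∑ k, z k * star (z k) = 0) : ∀ k, z k = 0 := by
  have h1 : ∑ k, z k * star (z k) = ((∑ k, Complex.normSq (z k) : ℝ) : ℂ) := by
    push_cast
    refine Finset.sum_congr rfl fun k _ => ?_
    rw [← Complex.mul_conj]; rfl
  rw [h1] at h
  have h2 : ∑ k, Complex.normSq (z k) = 0 := by exact_mod_cast h
  intro k
  have := (Finset.sum_eq_zero_iff_of_nonneg (fun i _ => Complex.normSq_nonneg (z i))).mp h2 k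
    (Finset.mem_univ k)
  exact Complex.normSq_eq_zero.mp this

lemma mul_std_mul_apply {d : ℕ} (B C : Mat d) (u v x y : Fin d) :
    ((B * single u v 1 * Cᴴ : Mat d)) x y = B x u * star (C y v) := by
  simp [Matrix.mul_apply, single, conjTranspose_apply, ite_and, mul_ite, ite_mul,
    mul_zero, zero_mul, Finset.sum_ite_eq, Finset.sum_ite_eq']

lemma kraus_scalar {d : ℕ} (hd : 0 < d) {ι : Type} [Fintype ι] (A : ι → Mat d)
    (p : ℝ) (hp : 0 < p)
    (h : ∀ X, ∑ k, A k * X * (A k)ᴴ = (p:ℂ) • X) :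
    ∃ c : ι → ℂ, (∀ k, A k = c k • (1 : Mat d)) ∧ ∃ k, c k ≠ 0 := by
  have heq : ∀ u v x y : Fin d, ∑ k, A k x u * star (A k y v)
      = (p:ℂ) * (if u = x ∧ v = y then 1 else 0) := by
    intro u v x y
    have h0 := congrFun (congrFun (h (single u v 1)) x) y
    rw [Matrix.sum_apply] at h0
    simp only [mul_std_mul_apply] at h0
    rw [h0]
    simp [single, smul_eq_mul]
  set i0 : Fin d := ⟨0, hd⟩
  set c : ι → ℂ := fun k => A k i0 i0 with hc
  have hoff : ∀ (k : ι) (x u : Fin d), x ≠ u → A k x u = 0 := by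
    intro k x u hxu
    refine sum_mul_conj_eq_zero (fun k => A k x u) ?_ k
    rw [heq u u x x, if_neg (by tauto), mul_zero]
  have hdiag : ∀ (k : ι) (x : Fin d), A k x x = c k := by
    intro k x
    have := sum_mul_conj_eq_zero (fun k => A k x x - c k) ?_ k
    · linear_combination this
    · simp only [star_sub, mul_sub, sub_mul, Finset.sum_sub_distrib]
      rw [hc]
      rw [heq x x x x, heq i0 x i0 x, heq x i0 x i0, heq i0 i0 i0 i0]
      simp
  refine ⟨c, fun k => ?_, ?_⟩
  · ext i j
    by_cases hij : i = j
    · subst hij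
      simp [hdiag k i, Matrix.one_apply]
    · simp [hoff k i j hij, Matrix.one_apply_ne hij]
  · by_contra hall
    push_neg at hall
    have h0 := heq i0 i0 i0 i0
    rw [if_pos ⟨rfl, rfl⟩, mul_one,
      Finset.sum_eq_zero (fun k _ => by
        rw [show A k i0 i0 = c k from rfl, hall k, zero_mul])] at h0
    exact (by exact_mod_cast hp.ne : (0:ℂ) ≠ (p:ℂ)) h0

/-- Theorem 1 (A) ⟺ (D): a channel with Kraus operators `Ek` is probabilistically
correctable for `ℂ^d` iff there are `S_*`, `R_*` with `R_* Eᵢ S_* = cᵢ • 1` and some `c_{i₀} ≠ 0`. -/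
theorem stmt_0 (d s r : ℕ) (hd : 1 ≤ d) (hs : 1 ≤ s) (hr : 1 ≤ r)
    (E : Mat s → Mat s) (Ek : Fin r → Mat s)
    (hEk : ∀ X, E X = ∑ i, Ek i * X * (Ek i)ᴴ)
    (hTP : ∑ i, (Ek i)ᴴ * Ek i = 1) :
    ProbCorrectable d E ↔
      ∃ (Sstar : Matrix (Fin s) (Fin d) ℂ) (Rstar : Matrix (Fin d) (Fin s) ℂ)
        (c : Fin r → ℂ),
        (∀ i, Rstar * Ek i * Sstar = c i • (1 : Mat d)) ∧ ∃ i₀, c i₀ ≠ 0 := by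
  constructor
  · rintro ⟨S, R, p, ⟨kS, Ks, hKs, -⟩, ⟨kR, Kr, hKr, -⟩, hp, hcorr⟩
    set A : Fin kR × Fin r × Fin kS → Mat d :=
      fun t => Kr t.1 * Ek t.2.1 * Ks t.2.2 with hA
    have hAeq : ∀ X, ∑ t, A t * X * (A t)ᴴ = (p:ℂ) • X := by
      intro X
      rw [← hcorr X, hKr, hEk, hKs]
      simp only [Matrix.mul_sum, Matrix.sum_mul, Fintype.sum_prod_type, hA,
        conjTranspose_mul, Matrix.mul_assoc]
    obtain ⟨c, hcall, ⟨b0, i0, a0⟩, hk0⟩ := kraus_scalar hd A p hp hAeq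
    exact ⟨Ks a0, Kr b0, fun i => c (b0, i, a0), fun i => hcall (b0, i, a0), i0, hk0⟩
  · rintro ⟨Sstar, Rstar, c, hc, i0, hi0⟩
    obtain ⟨t, ht, htP⟩ := exists_scale Sstar
    obtain ⟨u, hu, huP⟩ := exists_scale Rstar
    set K : Matrix (Fin s) (Fin d) ℂ := (t:ℂ) • Sstar with hK
    set L : Matrix (Fin d) (Fin s) ℂ := (u:ℂ) • Rstar with hL
    refine ⟨fun X => K * X * Kᴴ, fun Y => L * Y * Lᴴ,
      t^2 * u^2 * ∑ i, Complex.normSq (c i), ?_, ?_, ?_, ?_⟩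
    · refine ⟨1, fun _ => K, fun X => by rw [Fin.sum_univ_one], ?_⟩
      rw [Fin.sum_univ_one]
      have : Kᴴ * K = ((t:ℂ)^2) • (Sstarᴴ * Sstar) := by
        rw [hK, conjTranspose_smul, Matrix.smul_mul, Matrix.mul_smul, smul_smul]
        congr 1
        simp [pow_two, Complex.star_def, Complex.conj_ofReal]
      rw [this]; exact htP
    · refine ⟨1, fun _ => L, fun X => by rw [Fin.sum_univ_one], ?_⟩
      rw [Fin.sum_univ_one]
      have : Lᴴ * L = ((u:ℂ)^2) • (Rstarᴴ * Rstar) := by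
        rw [hL, conjTranspose_smul, Matrix.smul_mul, Matrix.mul_smul, smul_smul]
        congr 1
        simp [pow_two, Complex.star_def, Complex.conj_ofReal]
      rw [this]; exact huP
    · have hsum : 0 < ∑ i, Complex.normSq (c i) := by
        refine Finset.sum_pos' (fun i _ => Complex.normSq_nonneg _) ⟨i0, Finset.mem_univ _, ?_⟩
        exact Complex.normSq_pos.mpr hi0
      positivity
    · intro X
      beta_reduce
      rw [hEk, Matrix.mul_sum, Matrix.sum_mul]
      have hterm : ∀ i : Fin r, L * (Ek i * (K * X * Kᴴ) * (Ek i)ᴴ) * Lᴴ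
          = ((t^2 * u^2 * Complex.normSq (c i) : ℝ) : ℂ) • X := by
        intro i
        have h1 : L * Ek i * K = ((u * t : ℝ) * c i : ℂ) • (1 : Mat d) := by
          rw [hL, hK, Matrix.smul_mul, Matrix.smul_mul, Matrix.mul_smul, hc i,
            smul_smul, smul_smul]
          congr 1
          push_cast; ring
        calc L * (Ek i * (K * X * Kᴴ) * (Ek i)ᴴ) * Lᴴ
            = (L * Ek i * K) * X * (L * Ek i * K)ᴴ := by
              simp only [conjTranspose_mul, Matrix.mul_assoc]
          _ = ((t^2 * u^2 * Complex.normSq (c i) : ℝ) : ℂ) • X := by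
              rw [h1, conjTranspose_smul, conjTranspose_one, Matrix.smul_mul, Matrix.smul_mul,
                Matrix.mul_smul, Matrix.mul_one, Matrix.one_mul, smul_smul]
              congr 1
              simp only [Complex.star_def]
              rw [Complex.mul_conj]
              push_cast [Complex.normSq_mul, Complex.normSq_ofReal]
              ring
      rw [Finset.sum_congr rfl fun i _ => hterm i, ← Finset.sum_smul]
      congr 1
      push_cast
      rw [← Finset.mul_sum]
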